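/- Fix n ∈ ℕ and set d = 8+2n. Let A ⊂ ℙ^2 be a finite set contained in a smooth plane cubic curve C (the zero locus of a homogeneous polynomial F of degree 3 whose gradient does not vanish at any point of C). Then for every partition d = b_1 + b_2 + b_3 with b_1, b_2, b_3 ≥ 1, one has (k_{b_1}(A) + k_{b_2}(A) + k_{b_3}(A) − 2)/2 ≤ 11 + 3n; in particular, the reshaped Kruskal criterion cannot certify identifiability of any decomposition of length r > 11+3n whose points lie on a smooth cubic curve. -/

import Mathlib

open MvPolynomial
open scoped Classical

noncomputable section

/-- Points of the projective space `ℙ^m` over `ℂ`. -/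
abbrev Pt (m : ℕ) := Projectivization ℂ (Fin (m + 1) → ℂ)

/-- The linear form with coefficient vector `v`. -/
def linForm {m : ℕ} (v : Fin (m + 1) → ℂ) : MvPolynomial (Fin (m + 1)) ℂ :=
  ∑ i, C (v i) * X i

/-- The degree-`d` Veronese image of a projective point, i.e. the `d`-th power `L^d`
of a linear form `L` representing the point. -/
def powRep {m : ℕ} (d : ℕ) (P : Pt m) : MvPolynomial (Fin (m + 1)) ℂ :=
  linForm P.rep ^ d

/-- `A ⊆ ℙ^m` is a decomposition of the form `T` of degree `d`:
`T = a_1 L_1^d + ⋯ + a_r L_r^d`. -/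
def IsDecomp {m : ℕ} (d : ℕ) (A : Finset (Pt m))
    (T : MvPolynomial (Fin (m + 1)) ℂ) : Prop :=
  ∃ a : Pt m → ℂ, T = ∑ P ∈ A, a P • powRep d P

/-- A decomposition is non-redundant if `T` is not in the span of `ν_d(A')`
for any proper subset `A' ⊊ A`. -/
def NonRedundant {m : ℕ} (d : ℕ) (A : Finset (Pt m))
    (T : MvPolynomial (Fin (m + 1)) ℂ) : Prop :=
  ∀ A' : Finset (Pt m), A' ⊂ A →
    T ∉ Submodule.span ℂ (powRep d '' (A' : Set (Pt m)))

/-- The Cayley–Bacharach property `CB(d)`. -/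
def CB {m : ℕ} (d : ℕ) (Z : Finset (Pt m)) : Prop :=
  ∀ P ∈ Z, ∀ F : MvPolynomial (Fin (m + 1)) ℂ, F.IsHomogeneous d →
    (∀ Q ∈ Z.erase P, eval Q.rep F = 0) → eval P.rep F = 0

/-- The `d`-th Kruskal rank of a finite set `Z ⊂ ℙ^m`: the largest `k` (at most `ℓ(Z)`)
such that the Veronese images of every subset of `Z` of cardinality at most `k`
are linearly independent. -/
def kruskalRank {m : ℕ} (d : ℕ) (Z : Finset (Pt m)) : ℕ :=
  sSup {k | k ≤ Z.card ∧ ∀ S ⊆ Z, S.card ≤ k →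
    LinearIndependent ℂ (fun P : S => powRep d P.1)}

/-- The evaluation map of degree `d` on (representatives of) the points of `Z`. -/
def evalMap {m : ℕ} (Z : Finset (Pt m)) (d : ℕ) :
    homogeneousSubmodule (Fin (m + 1)) ℂ d →ₗ[ℂ] (Z → ℂ) where
  toFun F P := eval (P : Pt m).rep F.1
  map_add' F G := by funext P; simp
  map_smul' c F := by funext P; simp [smul_eq_C_mul]

/-- The Hilbert function of a finite set of points `Z ⊂ ℙ^m`. -/
def hf {m : ℕ} (Z : Finset (Pt m)) (d : ℕ) : ℕ :=
  Module.finrank ℂ (LinearMap.range (evalMap Z d))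

/-- The first difference of the Hilbert function (with `h_Z(j) = 0` for `j < 0`). -/
def Dhf {m : ℕ} (Z : Finset (Pt m)) (j : ℕ) : ℤ :=
  if j = 0 then (hf Z 0 : ℤ) else (hf Z j : ℤ) - (hf Z (j - 1) : ℤ)

-- dimension facts
def homogEquiv (m d : ℕ) :
    (homogeneousSubmodule (Fin m) ℂ d) ≃ₗ[ℂ] ({x : Fin m →₀ ℕ | x.degree = d} →₀ ℂ) :=
  (LinearEquiv.ofEq _ _ (homogeneousSubmodule_eq_finsupp_supported (σ := Fin m) (R := ℂ) d)).trans
    (AddMonoidAlgebra.supportedEquivFinsupp _)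

def symEquiv (m d : ℕ) : Sym (Fin m) d ≃ {x : Fin m →₀ ℕ | x.degree = d} :=
  (Sym.equivNatSum (Fin m) d).trans (Equiv.subtypeEquivRight (by
    intro x
    simp [Finsupp.degree_apply, Finsupp.sum]))

instance (m d : ℕ) : Fintype {x : Fin m →₀ ℕ | x.degree = d} :=
  Fintype.ofEquiv _ (symEquiv m d)

lemma card_set (m d : ℕ) : Fintype.card {x : Fin m →₀ ℕ | x.degree = d} = (m + d - 1).choose d := by
  rw [← Fintype.card_congr (symEquiv m d), Sym.card_sym_eq_choose, Fintype.card_fin]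

instance (m d : ℕ) : FiniteDimensional ℂ (homogeneousSubmodule (Fin m) ℂ d) :=
  Module.Finite.equiv (homogEquiv m d).symm

lemma finrank_homog (m d : ℕ) :
    Module.finrank ℂ (homogeneousSubmodule (Fin m) ℂ d) = (m + d - 1).choose d := by
  rw [(homogEquiv m d).finrank_eq, Module.finrank_finsupp, card_set]
  simp

-- evaluation functional
def evalLin (v : Fin 3 → ℂ) : MvPolynomial (Fin 3) ℂ →ₗ[ℂ] ℂ where
  toFun := eval v
  map_add' := by simp
  map_smul' := by simp [smul_eval]

lemma eval_linForm (v x : Fin 3 → ℂ) : eval x (linForm (m := 2) v) = ∑ i, v i * x i := by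
  simp [linForm]

lemma linForm_isHomogeneous (v : Fin 3 → ℂ) : (linForm (m := 2) v).IsHomogeneous 1 := by
  apply IsHomogeneous.sum
  intro i _
  simpa using (isHomogeneous_C (Fin 3) (v i)).mul (isHomogeneous_X ℂ i)

lemma powRep_mem (b : ℕ) (P : Pt 2) : powRep b P ∈ homogeneousSubmodule (Fin 3) ℂ b := by
  simpa [powRep] using (linForm_isHomogeneous P.rep).pow b

lemma card_le_of_li (b : ℕ) (hb : 1 ≤ b) (F : MvPolynomial (Fin 3) ℂ) (hF0 : F ≠ 0)
    (hFhom : F.IsHomogeneous 3) (S : Finset (Pt 2))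
    (hSC : ∀ P ∈ S, eval (Projectivization.rep P) F = 0)
    (hli : LinearIndependent ℂ (fun P : S => powRep b P.1)) :
    S.card ≤ 3 * b := by
  classical
  set V := homogeneousSubmodule (Fin 3) ℂ b with hV
  -- the evaluation functionals on V are linearly independent
  have key : LinearIndependent ℂ (fun P : S => (evalLin P.1.rep).comp V.subtype) := by
    rw [Fintype.linearIndependent_iff] at hli ⊢
    intro c hc
    apply hli c
    have hzero : (∑ P : S, c P • powRep b P.1) = 0 := by
      apply MvPolynomial.funext
      intro w
      have hw : linForm (m := 2) w ^ b ∈ V := by simpa [hV] using (linForm_isHomogeneous w).pow b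
      have := congrArg (fun φ : V →ₗ[ℂ] ℂ => φ ⟨linForm (m := 2) w ^ b, hw⟩) hc
      simp only [LinearMap.sum_apply, LinearMap.smul_apply, LinearMap.comp_apply,
        Submodule.coe_subtype, LinearMap.zero_apply] at this
      rw [map_sum, map_zero]
      rw [← this]
      apply Finset.sum_congr rfl
      intro P _
      simp only [smul_eq_mul, smul_eval, evalLin, LinearMap.coe_mk, AddHom.coe_mk]
      refine congrArg (c P * ·) ?_
      rw [powRep, map_pow, map_pow, eval_linForm, eval_linForm]
      congr 1
      rw [Finset.sum_congr rfl]
      intro i _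
      ring
    exact hzero

  rcases le_or_gt b 2 with hb2 | hb3
  · -- small degrees: bound by dim of V
    have hcard := key.fintype_card_le_finrank
    rw [Fintype.card_coe] at hcard
    have hdual : Module.finrank ℂ (V →ₗ[ℂ] ℂ) = Module.finrank ℂ V :=
      Subspace.dual_finrank_eq
    rw [hdual, hV, finrank_homog] at hcard
    interval_cases b <;> simpa [Nat.choose] using hcard
  · -- b ≥ 3: functionals annihilate F * (degree b-3 forms)
    obtain ⟨e, rfl⟩ : ∃ e, b = e + 3 := ⟨b - 3, by omega⟩
    have hmulhom : ∀ G : homogeneousSubmodule (Fin 3) ℂ e,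
        F * G.1 ∈ homogeneousSubmodule (Fin 3) ℂ (e + 3) := by
      intro G
      have := hFhom.mul (mem_homogeneousSubmodule _ _ |>.mp G.2)
      have h : e + 3 = 3 + e := by omega
      rw [h, mem_homogeneousSubmodule]
      exact this
    let mulF : homogeneousSubmodule (Fin 3) ℂ e →ₗ[ℂ] V :=
      { toFun := fun G => ⟨F * G.1, hmulhom G⟩
        map_add' := by intro x y; ext; simp [mul_add]
        map_smul' := by intro c x; ext; simp [Algebra.mul_smul_comm] }
    have hinj : Function.Injective mulF := by
      intro x y hxy
      have : F * x.1 = F * y.1 := congrArg Subtype.val hxy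
      exact Subtype.ext (mul_left_cancel₀ hF0 this)
    set W := LinearMap.range mulF with hW
    have hWfr : Module.finrank ℂ W = (3 + e - 1).choose e := by
      rw [hW, LinearMap.finrank_range_of_inj hinj, finrank_homog]
    have hmem : ∀ P : S, (evalLin P.1.rep).comp V.subtype ∈ W.dualAnnihilator := by
      intro P
      rw [Submodule.mem_dualAnnihilator]
      rintro w ⟨G, rfl⟩
      have h0 : eval P.1.rep F = 0 := hSC P.1 P.2
      simp [mulF, evalLin, h0]
    let g : S → W.dualAnnihilator := fun P => ⟨_, hmem P⟩
    have hgli : LinearIndependent ℂ g := by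
      apply LinearIndependent.of_comp W.dualAnnihilator.subtype
      exact key
    have hcard := hgli.fintype_card_le_finrank
    rw [Fintype.card_coe] at hcard
    have hann := Submodule.finrank_quotient_add_finrank W
    rw [(Subspace.quotEquivAnnihilator W).finrank_eq] at hann
    have h1 : (3 + (e + 3) - 1).choose (e + 3) = (e + 5) * (e + 4) / 2 := by
      have h : (3 + (e + 3) - 1) = e + 5 := by omega
      rw [h, ← Nat.choose_symm (by omega : e + 3 ≤ e + 5)]
      have h' : e + 5 - (e + 3) = 2 := by omega
      rw [h', Nat.choose_two_right]
      simp
    have h2 : (3 + e - 1).choose e = (e + 2) * (e + 1) / 2 := by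
      have h : (3 + e - 1) = e + 2 := by omega
      rw [h, ← Nat.choose_symm (by omega : e ≤ e + 2)]
      have h' : e + 2 - e = 2 := by omega
      rw [h', Nat.choose_two_right]
      simp
    have hVfr : Module.finrank ℂ V = (3 + (e + 3) - 1).choose (e + 3) := finrank_homog 3 (e + 3)
    rw [h1] at hVfr
    rw [h2] at hWfr
    obtain ⟨t, ht'⟩ := Nat.even_mul_succ_self (e + 1)
    have ht : (e + 2) * (e + 1) = 2 * t := by rw [mul_comm, ht']; ring
    have hVfr2 : Module.finrank ℂ V = (2 * t + (6 * e + 18)) / 2 := by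
      rw [hVfr]; congr 1; rw [← ht]; ring
    have hWfr2 : Module.finrank ℂ W = (2 * t) / 2 := by rw [hWfr, ht]
    omega

lemma kr_le (b : ℕ) (hb : 1 ≤ b) (A : Finset (Pt 2)) (F : MvPolynomial (Fin 3) ℂ)
    (hF0 : F ≠ 0) (hFhom : F.IsHomogeneous 3)
    (hAC : ∀ P ∈ A, eval (Projectivization.rep P) F = 0) :
    kruskalRank b A ≤ 3 * b := by
  rw [kruskalRank]
  apply csSup_le
  · refine ⟨0, Nat.zero_le _, ?_⟩
    intro S hS hcard
    have hSe : S = ∅ := Finset.card_eq_zero.mp (Nat.le_zero.mp hcard)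
    subst hSe
    exact linearIndependent_empty_type
  · rintro k ⟨hk1, hk2⟩
    by_contra hcon
    push_neg at hcon
    obtain ⟨S, hSA, hScard⟩ := Finset.exists_subset_card_eq
      (le_trans (by omega : 3 * b + 1 ≤ k) hk1)
    have hli := hk2 S hSA (by omega)
    have hle := card_le_of_li b hb F hF0 hFhom S (fun P hP => hAC P (hSA hP)) hli
    omega

/-- Fix `n` and `d = 8+2n`. If `A ⊂ ℙ²` lies on a smooth plane cubic, then
for every partition `d = b₁+b₂+b₃` with `bᵢ ≥ 1` one has
`(k_{b₁}(A) + k_{b₂}(A) + k_{b₃}(A) - 2)/2 ≤ 11 + 3n`, i.e.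
`k_{b₁}(A) + k_{b₂}(A) + k_{b₃}(A) ≤ 24 + 6n`. -/
theorem stmt16 (n : ℕ) (A : Finset (Pt 2)) (F : MvPolynomial (Fin 3) ℂ) (hF0 : F ≠ 0)
    (hFhom : F.IsHomogeneous 3)
    (hsmooth : ∀ v : Fin 3 → ℂ, v ≠ 0 → eval v F = 0 →
      ∃ i : Fin 3, eval v (pderiv i F) ≠ 0)
    (hAC : ∀ P ∈ A, eval (Projectivization.rep P) F = 0)
    (b₁ b₂ b₃ : ℕ) (hb₁ : 1 ≤ b₁) (hb₂ : 1 ≤ b₂) (hb₃ : 1 ≤ b₃)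
    (hsum : b₁ + b₂ + b₃ = 8 + 2 * n) :
    kruskalRank b₁ A + kruskalRank b₂ A + kruskalRank b₃ A ≤ 24 + 6 * n := by
  have h1 := kr_le b₁ hb₁ A F hF0 hFhom hAC
  have h2 := kr_le b₂ hb₂ A F hF0 hFhom hAC
  have h3 := kr_le b₃ hb₃ A F hF0 hFhom hAC
  omega

end
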